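/- With notation as before, if M(N,P) is nonempty and bounded then p_{i+} ∈ P for all i ∈ [m] and p_{+j} ∈ P for all j ∈ [n]; that is, all row-sum and column-sum constraints must be positivity constraints. -/

import Mathlib

/-- The open region `M(N,P)` of m x n real matrices with total sum 1, where the
entries indexed by `Ne` (and the row sums indexed by `rowN`, column sums indexed
by `colN`) are constrained to be negative, and all remaining entries, row sums
and column sums are constrained to be positive. -/
def MRegion (m n : ℕ) (Ne : Set (Fin m × Fin n)) (rowN : Set (Fin m)) (colN : Set (Fin n)) :
    Set (Fin m → Fin n → ℝ) :=
  {p | (∑ i, ∑ j, p i j) = 1 ∧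
    (∀ i j, ((i, j) ∈ Ne → p i j < 0) ∧ ((i, j) ∉ Ne → 0 < p i j)) ∧
    (∀ i, (i ∈ rowN → (∑ j, p i j) < 0) ∧ (i ∉ rowN → 0 < ∑ j, p i j)) ∧
    (∀ j, (j ∈ colN → (∑ i, p i j) < 0) ∧ (j ∉ colN → 0 < ∑ i, p i j))}

/-- If `M(N,P)` is nonempty and bounded then all row-sum and column-sum
constraints are positivity constraints: no row sum symbol and no column sum
symbol lies in `N`. -/
lemma abs_entry_le_norm (f : Fin m → Fin n → ℝ) (i : Fin m) (j : Fin n) : |f i j| ≤ ‖f‖ :=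
  calc |f i j| = ‖f i j‖ := (Real.norm_eq_abs _).symm
    _ ≤ ‖f i‖ := norm_le_pi_norm (f i) j
    _ ≤ ‖f‖ := norm_le_pi_norm f i

lemma unbounded_of_dir {m n : ℕ} (Ne : Set (Fin m × Fin n)) (rowN : Set (Fin m)) (colN : Set (Fin n))
    (p : Fin m → Fin n → ℝ) (hp : p ∈ MRegion m n Ne rowN colN)
    (d : Fin m → Fin n → ℝ) (hd0 : d ≠ 0)
    (hsum : ∑ i, ∑ j, d i j = 0)
    (hent : ∀ i j, ((i, j) ∈ Ne → d i j ≤ 0) ∧ ((i, j) ∉ Ne → 0 ≤ d i j))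
    (hrow : ∀ i, (i ∈ rowN → (∑ j, d i j) ≤ 0) ∧ (i ∉ rowN → 0 ≤ ∑ j, d i j))
    (hcol : ∀ j, (j ∈ colN → (∑ i, d i j) ≤ 0) ∧ (j ∉ colN → 0 ≤ ∑ i, d i j)) :
    ¬ Bornology.IsBounded (MRegion m n Ne rowN colN) := by
  intro hbd
  obtain ⟨C, hC⟩ := hbd.exists_norm_le
  obtain ⟨i, hi⟩ : ∃ i, d i ≠ 0 := Function.ne_iff.mp hd0
  obtain ⟨j, hj⟩ : ∃ j, d i j ≠ 0 := Function.ne_iff.mp hi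
  have hdpos : 0 < |d i j| := abs_pos.mpr hj
  set t : ℝ := (|C| + 1 + |p i j|) / |d i j| with hts
  have ht : 0 ≤ t := div_nonneg (by positivity) hdpos.le
  set q : Fin m → Fin n → ℝ := fun a b => p a b + t * d a b with hq
  obtain ⟨hp1, hp2, hp3, hp4⟩ := hp
  have hrowq : ∀ a, ∑ b, q a b = (∑ b, p a b) + t * ∑ b, d a b := by
    intro a
    simp only [hq, Finset.sum_add_distrib, Finset.mul_sum]
  have hcolq : ∀ b, ∑ a, q a b = (∑ a, p a b) + t * ∑ a, d a b := by
    intro b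
    simp only [hq, Finset.sum_add_distrib, Finset.mul_sum]
  have hmem : q ∈ MRegion m n Ne rowN colN := by
    refine ⟨?_, ?_, ?_, ?_⟩
    · have : ∑ a, ∑ b, q a b = (∑ a, ∑ b, p a b) + t * ∑ a, ∑ b, d a b := by
        simp only [hrowq, Finset.sum_add_distrib, Finset.mul_sum]
      rw [this, hp1, hsum]; ring
    · intro a b
      constructor
      · intro hab
        have h1 := (hp2 a b).1 hab
        have h2 := (hent a b).1 hab
        have h3 : q a b = p a b + t * d a b := rfl
        nlinarith
      · intro hab
        have h1 := (hp2 a b).2 hab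
        have h2 := (hent a b).2 hab
        have h3 : q a b = p a b + t * d a b := rfl
        nlinarith
    · intro a
      constructor
      · intro ha
        have h1 := (hp3 a).1 ha
        have h2 := (hrow a).1 ha
        rw [hrowq]; nlinarith
      · intro ha
        have h1 := (hp3 a).2 ha
        have h2 := (hrow a).2 ha
        rw [hrowq]; nlinarith
    · intro b
      constructor
      · intro hb
        have h1 := (hp4 b).1 hb
        have h2 := (hcol b).1 hb
        rw [hcolq]; nlinarith
      · intro hb
        have h1 := (hp4 b).2 hb
        have h2 := (hcol b).2 hb
        rw [hcolq]; nlinarith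
  have h1 : ‖q‖ ≤ C := hC q hmem
  have h2 : |q i j| ≤ ‖q‖ := abs_entry_le_norm q i j
  have h3 : t * |d i j| = |C| + 1 + |p i j| := div_mul_cancel₀ _ hdpos.ne'
  have h4 : |t * d i j| = t * |d i j| := by rw [abs_mul, abs_of_nonneg ht]
  have h5 : |t * d i j| ≤ |q i j| + |p i j| := by
    have : t * d i j = q i j + (-(p i j)) := by simp only [hq]; ring
    rw [this]
    calc |q i j + -p i j| ≤ |q i j| + |(-(p i j))| := abs_add_le _ _
      _ = |q i j| + |p i j| := by rw [abs_neg]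
  have h6 : C ≤ |C| := le_abs_self C
  linarith

lemma sum_ite_and_left {N : ℕ} (P : Prop) [Decidable P] (j : Fin N) :
    ∑ b : Fin N, (if P ∧ b = j then (1:ℝ) else 0) = if P then 1 else 0 := by
  by_cases h : P <;> simp [h]

lemma sum_ite_and_right {M : ℕ} (x : Fin M) (Q : Prop) [Decidable Q] :
    ∑ a : Fin M, (if a = x ∧ Q then (1:ℝ) else 0) = if Q then 1 else 0 := by
  by_cases h : Q <;> simp [h]

lemma key_row {m n : ℕ} (Ne : Set (Fin m × Fin n)) (rowN : Set (Fin m)) (colN : Set (Fin n))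
    (hne : (MRegion m n Ne rowN colN).Nonempty)
    (hbd : Bornology.IsBounded (MRegion m n Ne rowN colN)) : rowN = ∅ := by
  classical
  by_contra hRne
  obtain ⟨i0, hi0⟩ := Set.nonempty_iff_ne_empty.mpr hRne
  obtain ⟨p, hp⟩ := hne
  obtain ⟨hp1, hp2, hp3, hp4⟩ := hp
  haveI hn0 : Nonempty (Fin n) := by
    by_contra h
    rw [not_nonempty_iff] at h
    simp at hp1
  by_cases hA : ∃ i ∈ rowN, ∃ j ∈ colN, (i, j) ∈ Ne
  · -- Case A : d = p - indicator
    obtain ⟨i, hi, j, hj, hij⟩ := hA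
    set d : Fin m → Fin n → ℝ := fun a b => p a b - (if a = i ∧ b = j then 1 else 0) with hd
    have hindnn : ∀ a b, (0:ℝ) ≤ (if a = i ∧ b = j then 1 else 0) := by
      intro a b; split_ifs <;> norm_num
    have hds : ∀ a, ∑ b, d a b = (∑ b, p a b) - (if a = i then 1 else 0) := by
      intro a
      simp only [hd, Finset.sum_sub_distrib, sum_ite_and_left]
    have hdc : ∀ b, ∑ a, d a b = (∑ a, p a b) - (if b = j then 1 else 0) := by
      intro b
      simp only [hd, Finset.sum_sub_distrib, sum_ite_and_right]
    refine unbounded_of_dir Ne rowN colN p ⟨hp1, hp2, hp3, hp4⟩ d ?_ ?_ ?_ ?_ ?_ hbd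
    · -- d ≠ 0
      have hex : ∃ a b, (a, b) ∉ Ne := by
        by_contra h
        push_neg at h
        have h1 : ∀ a ∈ (Finset.univ : Finset (Fin m)), ∑ b, p a b ≤ 0 := by
          intro a _
          exact Finset.sum_nonpos fun b _ => ((hp2 a b).1 (h a b)).le
        have := Finset.sum_nonpos h1
        rw [hp1] at this; linarith
      obtain ⟨a, b, hab⟩ := hex
      intro h0
      have hz : d a b = 0 := by rw [h0]; rfl
      have hne1 : ¬(a = i ∧ b = j) := by rintro ⟨rfl, rfl⟩; exact hab hij
      have := (hp2 a b).2 hab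
      simp only [hd, if_neg hne1] at hz; linarith
    · -- total sum
      have : ∑ a, ∑ b, d a b = (∑ a, ∑ b, p a b) - 1 := by
        simp only [hds, Finset.sum_sub_distrib, Finset.sum_ite_eq', Finset.mem_univ, if_true]
      rw [this, hp1]; ring
    · intro a b
      constructor
      · intro hab
        have := (hp2 a b).1 hab
        have := hindnn a b
        simp only [hd]; linarith
      · intro hab
        have hne1 : ¬(a = i ∧ b = j) := by rintro ⟨rfl, rfl⟩; exact hab hij
        have := (hp2 a b).2 hab
        simp only [hd, if_neg hne1]; linarith
    · intro a
      constructor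
      · intro ha
        have := (hp3 a).1 ha
        rw [hds]
        split_ifs <;> linarith
      · intro ha
        have h1 : a ≠ i := by rintro rfl; exact ha hi
        rw [hds, if_neg h1]
        have := (hp3 a).2 ha
        linarith
    · intro b
      constructor
      · intro hb
        have := (hp4 b).1 hb
        rw [hdc]
        split_ifs <;> linarith
      · intro hb
        have h1 : b ≠ j := by rintro rfl; exact hb hj
        rw [hdc, if_neg h1]
        have := (hp4 b).2 hb
        linarith
  · by_cases hB : ∃ i ∈ rowN, ∃ j, ∃ i', (i, j) ∈ Ne ∧ (i', j) ∉ Ne ∧ i' ∉ rowN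
    · -- Case B
      obtain ⟨i, hi, j, i', hij, hi'j, hi'⟩ := hB
      have hii' : i ≠ i' := by rintro rfl; exact hi' hi
      set d : Fin m → Fin n → ℝ :=
        fun a b => (if a = i' ∧ b = j then 1 else 0) - (if a = i ∧ b = j then 1 else 0) with hd
      have hds : ∀ a, ∑ b, d a b = (if a = i' then 1 else 0) - (if a = i then 1 else 0) := by
        intro a
        simp only [hd, Finset.sum_sub_distrib, sum_ite_and_left]
      have hdc : ∀ b, ∑ a, d a b = 0 := by
        intro b
        simp only [hd, Finset.sum_sub_distrib, sum_ite_and_right, sub_self]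
      refine unbounded_of_dir Ne rowN colN p ⟨hp1, hp2, hp3, hp4⟩ d ?_ ?_ ?_ ?_ ?_ hbd
      · intro h0
        have hz : d i' j = 0 := by rw [h0]; rfl
        have hv : d i' j = 1 := by
          simp [hd, show i' ≠ i from fun h => hii' h.symm]
        rw [hv] at hz; norm_num at hz
      · simp only [hds, Finset.sum_sub_distrib, Finset.sum_ite_eq', Finset.mem_univ, if_true]
        ring
      · intro a b
        constructor
        · intro hab
          have h1 : ¬(a = i' ∧ b = j) := by rintro ⟨rfl, rfl⟩; exact hi'j hab
          simp only [hd, if_neg h1]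
          split_ifs <;> norm_num
        · intro hab
          have h1 : ¬(a = i ∧ b = j) := by rintro ⟨rfl, rfl⟩; exact hab hij
          simp only [hd, if_neg h1]
          split_ifs <;> norm_num
      · intro a
        constructor
        · intro ha
          have h1 : a ≠ i' := by rintro rfl; exact hi' ha
          rw [hds, if_neg h1]
          split_ifs <;> norm_num
        · intro ha
          have h1 : a ≠ i := by rintro rfl; exact ha hi
          rw [hds, if_neg h1]
          split_ifs <;> norm_num
      · intro b
        exact ⟨fun _ => (hdc b).le, fun _ => (hdc b).ge⟩
    · -- Case C : the cycle construction
      push_neg at hA hB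
      have step : ∀ i : Fin m, ∃ ji' : Fin n × Fin m,
          i ∈ rowN → ((i, ji'.1) ∈ Ne ∧ (ji'.2, ji'.1) ∉ Ne ∧ ji'.2 ∈ rowN) := by
        intro i
        by_cases hi : i ∈ rowN
        · have hrs := (hp3 i).1 hi
          have hj : ∃ j, (i, j) ∈ Ne := by
            by_contra h; push_neg at h
            have : 0 ≤ ∑ j, p i j := Finset.sum_nonneg fun j _ => ((hp2 i j).2 (h j)).le
            linarith
          obtain ⟨j, hij⟩ := hj
          have hjc : j ∉ colN := fun hjc => hA i hi j hjc hij
          have hcs := (hp4 j).2 hjc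
          have hi' : ∃ i', (i', j) ∉ Ne := by
            by_contra h; push_neg at h
            have : ∑ a, p a j ≤ 0 := Finset.sum_nonpos fun a _ => ((hp2 a j).1 (h a)).le
            linarith
          obtain ⟨i', hi'j⟩ := hi'
          exact ⟨(j, i'), fun _ => ⟨hij, hi'j, hB i hi j i' hij hi'j⟩⟩
        · exact ⟨(Classical.arbitrary _, i), fun h => absurd h hi⟩
      choose FF hFF using step
      set f : Fin m → Fin n := fun i => (FF i).1 with hfdef
      set g : Fin m → Fin m := fun i => (FF i).2 with hgdef
      set R : Finset (Fin m) := Finset.univ.filter (· ∈ rowN) with hRdef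
      have hR0 : R.Nonempty := ⟨i0, by simp [hRdef, hi0]⟩
      have hmemR : ∀ a, a ∈ R ↔ a ∈ rowN := by intro a; simp [hRdef]
      have hgR : ∀ a ∈ R, g a ∈ R := by
        intro a ha
        rw [hmemR] at ha ⊢
        exact (hFF a ha).2.2
      set S : ℕ → Finset (Fin m) := fun k => R.image g^[k] with hSdef
      have hS0 : S 0 = R := by simp [hSdef]
      have hSsub : ∀ k, S (k + 1) ⊆ S k := by
        intro k
        have h1 : S (k + 1) = (R.image g).image g^[k] := by
          rw [hSdef]
          simp only [Function.iterate_succ, Finset.image_image]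
        rw [h1]
        apply Finset.image_subset_image
        intro a ha
        obtain ⟨b, hb, rfl⟩ := Finset.mem_image.mp ha
        exact hgR b hb
      have hSR : ∀ k, S k ⊆ R := by
        intro k
        induction k with
        | zero => rw [hS0]
        | succ k ih => exact (hSsub k).trans ih
      have hstab : ∃ k, (S (k + 1)).card = (S k).card := by
        by_contra h; push_neg at h
        have hlt : ∀ k, (S (k + 1)).card < (S k).card :=
          fun k => lt_of_le_of_ne (Finset.card_le_card (hSsub k)) (h k)
        have key : ∀ k, (S k).card + k ≤ (S 0).card := by
          intro k
          induction k with
          | zero => simp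
          | succ k ih => have := hlt k; omega
        have := key ((S 0).card + 1); omega
      obtain ⟨k, hk⟩ := hstab
      set Cs : Finset (Fin m) := S k with hCsdef
      have hCne : Cs.Nonempty := hR0.image _
      have hCsub : Cs ⊆ R := hSR k
      have hSk1 : S (k + 1) = Cs.image g := by
        rw [hSdef, hCsdef, hSdef]
        simp only [Function.iterate_succ', Finset.image_image]
      have hCim : Cs.image g = Cs := by
        refine Finset.eq_of_subset_of_card_le (hSk1 ▸ hSsub k) ?_
        rw [← hSk1, hk]
      have hinj : Set.InjOn g Cs := Finset.injOn_of_card_image_eq (by rw [hCim])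
      have hprop : ∀ c ∈ Cs, (c, f c) ∈ Ne ∧ (g c, f c) ∉ Ne := by
        intro c hc
        have : c ∈ rowN := (hmemR c).mp (hCsub hc)
        exact ⟨(hFF c this).1, (hFF c this).2.1⟩
      set d : Fin m → Fin n → ℝ := fun a b =>
        ∑ c ∈ Cs, ((if a = g c ∧ b = f c then (1:ℝ) else 0) - (if a = c ∧ b = f c then 1 else 0))
        with hd
      have hrowd : ∀ a, ∑ b, d a b = 0 := by
        intro a
        simp only [hd]
        rw [Finset.sum_comm]
        have h1 : ∀ c ∈ Cs, (∑ b, ((if a = g c ∧ b = f c then (1:ℝ) else 0)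
            - (if a = c ∧ b = f c then 1 else 0)))
            = (if a = g c then 1 else 0) - (if a = c then 1 else 0) := by
          intro c _
          simp only [Finset.sum_sub_distrib, sum_ite_and_left]
        rw [Finset.sum_congr rfl h1, Finset.sum_sub_distrib]
        have h2 : ∑ c ∈ Cs, (if a = g c then (1:ℝ) else 0)
            = ∑ c ∈ Cs, (if a = c then (1:ℝ) else 0) := by
          have h3 := Finset.sum_image (s := Cs) (g := g)
            (f := fun c => if a = c then (1:ℝ) else 0)
            (fun x hx y hy h => hinj hx hy h)
          rw [hCim] at h3
          exact h3.symm
        rw [h2, sub_self]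
      have hcold : ∀ b, ∑ a, d a b = 0 := by
        intro b
        simp only [hd]
        rw [Finset.sum_comm]
        have h1 : ∀ c ∈ Cs, (∑ a, ((if a = g c ∧ b = f c then (1:ℝ) else 0)
            - (if a = c ∧ b = f c then 1 else 0))) = 0 := by
          intro c _
          simp only [Finset.sum_sub_distrib, sum_ite_and_right, sub_self]
        rw [Finset.sum_congr rfl h1, Finset.sum_const, smul_zero]
      refine unbounded_of_dir Ne rowN colN p ⟨hp1, hp2, hp3, hp4⟩ d ?_ ?_ ?_ ?_ ?_ hbd
      · -- d ≠ 0
        obtain ⟨c0, hc0⟩ := hCne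
        have hfirst : ∀ c ∈ Cs, (if c0 = g c ∧ f c0 = f c then (1:ℝ) else 0) = 0 := by
          intro c hc
          rw [if_neg]
          rintro ⟨h1, h2⟩
          exact (hprop c hc).2 (by rw [← h1, ← h2]; exact (hprop c0 hc0).1)
        have hval : d c0 (f c0)
            = -∑ c ∈ Cs, (if c0 = c ∧ f c0 = f c then (1:ℝ) else 0) := by
          simp only [hd]
          rw [Finset.sum_sub_distrib, Finset.sum_congr rfl hfirst]
          simp
        have hge : (1:ℝ) ≤ ∑ c ∈ Cs, (if c0 = c ∧ f c0 = f c then (1:ℝ) else 0) := by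
          have := Finset.single_le_sum
            (f := fun c => if c0 = c ∧ f c0 = f c then (1:ℝ) else 0)
            (fun c _ => by split_ifs <;> norm_num) hc0
          simpa using this
        intro h0
        have hz : d c0 (f c0) = 0 := by rw [h0]; rfl
        rw [hval] at hz; linarith
      · have h1 : ∀ a ∈ (Finset.univ : Finset (Fin m)), ∑ b, d a b = 0 := fun a _ => hrowd a
        rw [Finset.sum_congr rfl h1, Finset.sum_const, smul_zero]
      · intro a b
        constructor
        · intro hab
          simp only [hd]
          apply Finset.sum_nonpos
          intro c hc
          have h1 : ¬(a = g c ∧ b = f c) := by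
            rintro ⟨rfl, rfl⟩; exact (hprop c hc).2 hab
          rw [if_neg h1]
          split_ifs <;> norm_num
        · intro hab
          simp only [hd]
          apply Finset.sum_nonneg
          intro c hc
          have h1 : ¬(a = c ∧ b = f c) := by
            rintro ⟨rfl, rfl⟩; exact hab (hprop a hc).1
          rw [if_neg h1]
          split_ifs <;> norm_num
      · intro a
        exact ⟨fun _ => (hrowd a).le, fun _ => (hrowd a).ge⟩
      · intro b
        exact ⟨fun _ => (hcold b).le, fun _ => (hcold b).ge⟩

theorem mRegion_bounded_margins_positive {m n : ℕ} (hm : 2 ≤ m) (hn : 2 ≤ n)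
    (Ne : Set (Fin m × Fin n)) (rowN : Set (Fin m)) (colN : Set (Fin n))
    (hne : (MRegion m n Ne rowN colN).Nonempty)
    (hbd : Bornology.IsBounded (MRegion m n Ne rowN colN)) :
    rowN = ∅ ∧ colN = ∅ := by
  constructor
  · exact key_row Ne rowN colN hne hbd
  · set Ne' : Set (Fin n × Fin m) := {q | (q.2, q.1) ∈ Ne} with hNe'
    have hmemT : ∀ p : Fin m → Fin n → ℝ, p ∈ MRegion m n Ne rowN colN →
        (fun j i => p i j) ∈ MRegion n m Ne' colN rowN := by
      rintro p ⟨h1, h2, h3, h4⟩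
      refine ⟨?_, ?_, ?_, ?_⟩
      · rw [Finset.sum_comm]; exact h1
      · intro j i
        exact ⟨fun h => (h2 i j).1 h, fun h => (h2 i j).2 h⟩
      · exact fun j => h4 j
      · exact fun i => h3 i
    apply key_row Ne' colN rowN
    · obtain ⟨p, hp⟩ := hne
      exact ⟨_, hmemT p hp⟩
    · obtain ⟨C, hC⟩ := hbd.exists_norm_le
      rw [isBounded_iff_forall_norm_le]
      refine ⟨C, ?_⟩
      intro q hq
      have hqmem : (fun i j => q j i) ∈ MRegion m n Ne rowN colN := by
        obtain ⟨h1, h2, h3, h4⟩ := hq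
        refine ⟨?_, ?_, ?_, ?_⟩
        · rw [Finset.sum_comm]; exact h1
        · intro i j
          exact ⟨fun h => (h2 j i).1 h, fun h => (h2 j i).2 h⟩
        · exact fun i => h4 i
        · exact fun j => h3 j
      have h1 : ‖q‖ ≤ ‖(fun i j => q j i : Fin m → Fin n → ℝ)‖ := by
        rw [pi_norm_le_iff_of_nonneg (norm_nonneg _)]
        intro j
        rw [pi_norm_le_iff_of_nonneg (norm_nonneg _)]
        intro i
        rw [Real.norm_eq_abs]
        exact abs_entry_le_norm (fun i j => q j i) i j
      exact h1.trans (hC _ hqmem)
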